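/- arXiv:2505.21247 — 7 statements merged into one kernel-verified Lean document; each statement's English description precedes it below -/
import Mathlib

section
/- Let L : ℝ^N × ℝ_{>0} → ℝ satisfy: (i) for each fixed β > 0, L(·, β) is convex, continuously differentiable, L(0, β) = 0, and L(x, β) > 0 for x ≠ 0; (ii) L is positively homogeneous of degree 1 jointly: L(Cx, Cβ) = C·L(x, β) for C > 0; (iii) lim_{|x|/β → ∞} (L(x, β) − MAE(x))/β = −1, where MAE(x) = (1/N)·Σ_i |x_i|. Fix γ ∈ (0, 1) and x ≠ 0. Then the equation L(x, γ·l) = l has a unique solution l > 0. -/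
open Filter

/-- Mean absolute error of an error vector. -/
noncomputable def MAE {N : ℕ} (x : Fin N → ℝ) : ℝ := (1 / N) * ∑ i, |x i|

/-- Existence and uniqueness of the self-consistent loss value: under convexity,
smoothness, positivity, joint degree-1 positive homogeneity, and the boundary limit
`(L(x,β) − MAE(x))/β → −1` as `β → 0⁺` (equivalently `|x|/β → ∞`), the equation
`L(x, γ·l) = l` has a unique positive solution `l` for each `x ≠ 0` and `γ ∈ (0,1)`. -/
theorem self_consistent_loss_exists_unique {N : ℕ} (L : (Fin N → ℝ) → ℝ → ℝ)
    (hconv : ∀ β : ℝ, 0 < β → ConvexOn ℝ Set.univ (fun y => L y β))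
    (hsmooth : ∀ β : ℝ, 0 < β → ContDiff ℝ 1 (fun y => L y β))
    (hzero : ∀ β : ℝ, 0 < β → L 0 β = 0)
    (hpos : ∀ (y : Fin N → ℝ), y ≠ 0 → ∀ β : ℝ, 0 < β → 0 < L y β)
    (hhom : ∀ C : ℝ, 0 < C → ∀ (y : Fin N → ℝ) (β : ℝ), L (C • y) (C * β) = C * L y β)
    (hlim : ∀ (y : Fin N → ℝ), y ≠ 0 →
      Tendsto (fun β : ℝ => (L y β - MAE y) / β) (nhdsWithin 0 (Set.Ioi 0)) (nhds (-1)))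
    (γ : ℝ) (hγ : γ ∈ Set.Ioo (0 : ℝ) 1)
    (x : Fin N → ℝ) (hx : x ≠ 0) :
    ∃! l : ℝ, 0 < l ∧ L x (γ * l) = l := by
  obtain ⟨hγ0, hγ1⟩ := hγ
  -- MAE x > 0
  have hNe : Nonempty (Fin N) := by
    by_contra h
    exact hx (funext fun i => absurd ⟨i⟩ h)
  have hN : 0 < N := Fin.pos_iff_nonempty.mpr hNe
  obtain ⟨i0, hi0⟩ := Function.ne_iff.mp hx
  have hsum : 0 < ∑ i, |x i| := by
    have h1 : |x i0| ≤ ∑ i, |x i| :=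
      Finset.single_le_sum (fun i _ => abs_nonneg (x i)) (Finset.mem_univ i0)
    have h2 : 0 < |x i0| := abs_pos.mpr hi0
    linarith
  have hMAE : 0 < MAE x := by
    have : (0:ℝ) < (N:ℝ) := by exact_mod_cast hN
    unfold MAE
    positivity
  -- L x is nonincreasing in β on (0,∞)
  have key : ∀ β₁ β₂ : ℝ, 0 < β₁ → β₁ ≤ β₂ → L x β₂ ≤ L x β₁ := by
    intro β₁ β₂ h1 h12
    have h2 : 0 < β₂ := lt_of_lt_of_le h1 h12
    set t := β₁ / β₂ with ht
    have ht0 : 0 < t := div_pos h1 h2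
    have ht1 : t ≤ 1 := (div_le_one h2).mpr h12
    have hc := (hconv β₁ h1).2 (Set.mem_univ x) (Set.mem_univ (0 : Fin N → ℝ))
      ht0.le (by linarith : (0:ℝ) ≤ 1 - t) (by ring)
    simp only [smul_zero, add_zero, hzero β₁ h1, mul_zero, smul_eq_mul] at hc
    -- hc : L (t • x) β₁ ≤ t * L x β₁
    have hh := hhom t ht0 x β₂
    have htb : t * β₂ = β₁ := by rw [ht]; exact div_mul_cancel₀ β₁ h2.ne'
    rw [htb] at hh
    -- hh : L (t • x) β₁ = t * L x β₂
    rw [hh] at hc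
    exact le_of_mul_le_mul_left hc ht0
  -- convenient representation via homogeneity
  have hrep : ∀ l : ℝ, 0 < l → L x (γ * l) = (γ * l) * L ((γ * l)⁻¹ • x) 1 := by
    intro l hl
    have hgl : 0 < γ * l := mul_pos hγ0 hl
    have := hhom (γ * l) hgl ((γ * l)⁻¹ • x) 1
    rw [smul_smul, mul_inv_cancel₀ hgl.ne', one_smul, mul_one] at this
    exact this
  have hLC : Continuous (fun y => L y 1) := (hsmooth 1 one_pos).continuous
  set F : ℝ → ℝ := fun l => (γ * l) * L ((γ * l)⁻¹ • x) 1 with hF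
  have hFcont : ContinuousOn F (Set.Ioi 0) := by
    apply ContinuousOn.mul
    · exact (continuous_const.mul continuous_id).continuousOn
    · apply hLC.comp_continuousOn
      apply ContinuousOn.fun_smul _ continuousOn_const
      apply ContinuousOn.inv₀ (continuous_const.mul continuous_id).continuousOn
      intro l hl
      exact ne_of_gt (mul_pos hγ0 hl)
  set f : ℝ → ℝ := fun l => L x (γ * l) - l with hf
  -- limit of L x β as β → 0⁺ is MAE x
  have hL0 : Tendsto (fun β : ℝ => L x β) (nhdsWithin 0 (Set.Ioi 0)) (nhds (MAE x)) := by
    have h1 : Tendsto (fun β : ℝ => MAE x + β * ((L x β - MAE x) / β))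
        (nhdsWithin 0 (Set.Ioi 0)) (nhds (MAE x + 0 * (-1))) := by
      apply Tendsto.add tendsto_const_nhds
      exact Tendsto.mul (tendsto_nhdsWithin_of_tendsto_nhds tendsto_id) (hlim x hx)
    rw [show MAE x + 0 * (-1) = MAE x by ring] at h1
    apply h1.congr'
    filter_upwards [self_mem_nhdsWithin] with β (hβ : β ∈ Set.Ioi 0)
    have hβ' : β ≠ 0 := ne_of_gt hβ
    field_simp
    ring
  have hmap : Tendsto (fun l : ℝ => γ * l) (nhdsWithin 0 (Set.Ioi 0))
      (nhdsWithin 0 (Set.Ioi 0)) := by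
    rw [tendsto_nhdsWithin_iff]
    constructor
    · have : Tendsto (fun l : ℝ => γ * l) (nhds 0) (nhds (γ * 0)) :=
        (continuous_const.mul continuous_id).tendsto 0
      rw [mul_zero] at this
      exact this.mono_left nhdsWithin_le_nhds
    · filter_upwards [self_mem_nhdsWithin] with l (hl : l ∈ Set.Ioi 0)
      exact mul_pos hγ0 hl
  have hf0 : Tendsto f (nhdsWithin 0 (Set.Ioi 0)) (nhds (MAE x)) := by
    have h1 : Tendsto (fun l : ℝ => L x (γ * l)) (nhdsWithin 0 (Set.Ioi 0)) (nhds (MAE x)) :=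
      hL0.comp hmap
    have h2 : Tendsto (fun l : ℝ => l) (nhdsWithin 0 (Set.Ioi 0)) (nhds 0) :=
      tendsto_nhdsWithin_of_tendsto_nhds tendsto_id
    have := h1.sub h2
    rw [sub_zero] at this
    exact this
  -- find a > 0 with f a > 0
  obtain ⟨a, hfa, ha⟩ :=
    ((hf0.eventually (eventually_gt_nhds hMAE)).and self_mem_nhdsWithin).exists
  have ha0 : 0 < a := ha
  -- behavior at infinity
  have hG : Tendsto (fun l : ℝ => γ * L ((γ * l)⁻¹ • x) 1) atTop (nhds 0) := by
    have h1 : Tendsto (fun l : ℝ => (γ * l)⁻¹ • x) atTop (nhds (0 : Fin N → ℝ)) := by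
      have h2 : Tendsto (fun l : ℝ => (γ * l)⁻¹) atTop (nhds 0) := by
        apply Tendsto.inv_tendsto_atTop
        exact Tendsto.const_mul_atTop hγ0 tendsto_id
      have := h2.smul_const x
      rwa [zero_smul] at this
    have h3 : Tendsto (fun l : ℝ => L ((γ * l)⁻¹ • x) 1) atTop (nhds (L 0 1)) :=
      (hLC.tendsto 0).comp h1
    rw [hzero 1 one_pos] at h3
    have := h3.const_mul γ
    rwa [mul_zero] at this
  obtain ⟨b, hb⟩ := ((hG.eventually (eventually_lt_nhds (by norm_num : (0:ℝ) < 1/2))).and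
    ((eventually_gt_atTop a).and (eventually_gt_atTop 0))).exists
  obtain ⟨hGb, hba, hb0⟩ := hb
  have hfb : f b < 0 := by
    have : L x (γ * b) = b * (γ * L ((γ * b)⁻¹ • x) 1) := by
      rw [hrep b hb0]; ring
    have h4 : b * (γ * L ((γ * b)⁻¹ • x) 1) < b * (1/2) :=
      (mul_lt_mul_iff_right₀ hb0).mpr hGb
    simp only [hf]
    rw [this]
    linarith
  -- IVT
  have hsub : Set.Icc a b ⊆ Set.Ioi 0 := fun y hy => lt_of_lt_of_le ha0 hy.1
  have hfcont : ContinuousOn f (Set.Icc a b) := by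
    apply ContinuousOn.sub _ continuousOn_id
    apply (hFcont.mono hsub).congr
    intro y hy
    exact hrep y (hsub hy)
  have hivt := intermediate_value_Icc' hba.le hfcont
  have h0mem : (0:ℝ) ∈ Set.Icc (f b) (f a) := ⟨hfb.le, hfa.le⟩
  obtain ⟨c, hc, hfc⟩ := hivt h0mem
  have hc0 : 0 < c := lt_of_lt_of_le ha0 hc.1
  have hceq : L x (γ * c) = c := by
    have : L x (γ * c) - c = 0 := hfc
    linarith
  refine ⟨c, ⟨hc0, hceq⟩, ?_⟩
  rintro l ⟨hl0, hleq⟩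
  rcases le_total l c with h | h
  · -- γ l ≤ γ c, so c = L x (γ c) ≤ L x (γ l) = l
    have := key (γ * l) (γ * c) (mul_pos hγ0 hl0) (by nlinarith)
    rw [hleq, hceq] at this
    linarith
  · have := key (γ * c) (γ * l) (mul_pos hγ0 hc0) (by nlinarith)
    rw [hleq, hceq] at this
    linarith
end

section
/- Under the hypotheses of the previous setting (L convex and positive in x, jointly degree-1 positively homogeneous, with the boundary limit lim_{|x|/β→∞}(L(x,β) − MAE(x))/β = −1 and ∇_x L(0,β) = 0), the self-consistent loss L_SC : ℝ^N → ℝ defined by L(x, γ·L_SC(x)) = L_SC(x) for x ≠ 0 and L_SC(0) = 0 satisfies 1 ≤ MAE(x)/L_SC(x) ≤ 1 + γ for every x ≠ 0, where MAE(x) = (1/N)·Σ_i |x_i|. -/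
open Filter

/-- A convex function on ℝ tending to a finite limit at `atTop` is bounded below
by that limit. -/
lemma convex_ge_of_tendsto_atTop {f : ℝ → ℝ} {c : ℝ}
    (hf : ConvexOn ℝ Set.univ f) (hl : Tendsto f atTop (nhds c)) :
    ∀ t, c ≤ f t := by
  by_contra hcon
  push_neg at hcon
  obtain ⟨t0, ht0⟩ := hcon
  have h1 : ∀ᶠ s in atTop, f t0 < f s := hl.eventually (eventually_gt_nhds ht0)
  obtain ⟨s, hs1, hs2⟩ := (h1.and (eventually_gt_atTop t0)).exists
  set m : ℝ := (f s - f t0) / (s - t0) with hm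
  have hst : (0:ℝ) < s - t0 := by linarith
  have hmpos : 0 < m := div_pos (by linarith) hst
  have h2 : ∀ᶠ u in atTop, f u < c + 1 := hl.eventually (eventually_lt_nhds (lt_add_one c))
  obtain ⟨u, ⟨hu1, hu2'⟩, hu3⟩ :=
    ((h2.and (eventually_gt_atTop s)).and
      (eventually_gt_atTop (s + (c + 1 - f s) / m))).exists
  have hus : (0:ℝ) < u - s := by linarith
  have hslope := hf.slope_mono_adjacent (Set.mem_univ t0) (Set.mem_univ u) hs2 hu2'
  -- hslope : m ≤ (f u - f s) / (u - s)
  have h4 : m * (u - s) ≤ f u - f s := by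
    have h := (div_le_div_iff₀ hst hus).mp hslope
    have hm2 : m * (s - t0) = f s - f t0 := by rw [hm]; exact div_mul_cancel₀ _ (ne_of_gt hst)
    nlinarith [h, hm2, hst]
  have h5 : (c + 1 - f s) / m < u - s := by linarith
  have h6 : c + 1 - f s < m * (u - s) := by
    rw [div_lt_iff₀ hmpos] at h5
    nlinarith
  linarith

/-- The self-consistent loss `L_SC`, defined by `L(x, γ·L_SC(x)) = L_SC(x)`,
satisfies `1 ≤ MAE(x)/L_SC(x) ≤ 1 + γ`. -/
theorem self_consistent_loss_mae_bounds {N : ℕ} (L : (Fin N → ℝ) → ℝ → ℝ)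
    (hconv : ∀ β : ℝ, 0 < β → ConvexOn ℝ Set.univ (fun y => L y β))
    (hzero : ∀ β : ℝ, 0 < β → L 0 β = 0)
    (hpos : ∀ (y : Fin N → ℝ), y ≠ 0 → ∀ β : ℝ, 0 < β → 0 < L y β)
    (hhom : ∀ C : ℝ, 0 < C → ∀ (y : Fin N → ℝ) (β : ℝ), L (C • y) (C * β) = C * L y β)
    (hgrad : ∀ β : ℝ, 0 < β → fderiv ℝ (fun y => L y β) 0 = 0)
    (hlim : ∀ (y : Fin N → ℝ), y ≠ 0 →
      Tendsto (fun β : ℝ => (L y β - MAE y) / β) (nhdsWithin 0 (Set.Ioi 0)) (nhds (-1)))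
    (γ : ℝ) (hγ : γ ∈ Set.Ioo (0 : ℝ) 1)
    (LSC : (Fin N → ℝ) → ℝ)
    (hLSC0 : LSC 0 = 0)
    (hLSC : ∀ (y : Fin N → ℝ), y ≠ 0 → 0 < LSC y ∧ L y (γ * LSC y) = LSC y)
    (x : Fin N → ℝ) (hx : x ≠ 0) :
    1 ≤ MAE x / LSC x ∧ MAE x / LSC x ≤ 1 + γ := by
  obtain ⟨hγ0, hγ1⟩ := hγ
  obtain ⟨hLpos, hLeq⟩ := hLSC x hx
  set β₀ : ℝ := γ * LSC x with hβ₀def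
  have hβ₀ : 0 < β₀ := mul_pos hγ0 hLpos
  -- homogeneity rephrased: for β > 0, L x β = β * L ((1/β) • x) 1
  have hhom' : ∀ β : ℝ, 0 < β → L x β = β * L (β⁻¹ • x) 1 := by
    intro β hβ
    have := hhom β hβ (β⁻¹ • x) 1
    rw [smul_smul, mul_inv_cancel₀ (ne_of_gt hβ), one_smul, mul_one] at this
    rw [this]
  -- Monotonicity: for 0 < β ≤ β₀, L x β₀ ≤ L x β
  have hmono : ∀ β : ℝ, 0 < β → β ≤ β₀ → L x β₀ ≤ L x β := by
    intro β hβ hββ₀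
    set C : ℝ := β₀ / β with hC
    have hC1 : 1 ≤ C := (one_le_div hβ).mpr hββ₀
    have hCpos : 0 < C := lt_of_lt_of_le one_pos hC1
    have key : L x β₀ = C * L (C⁻¹ • x) β := by
      have := hhom C hCpos (C⁻¹ • x) β
      rw [smul_smul, mul_inv_cancel₀ (ne_of_gt hCpos), one_smul] at this
      have hCβ : C * β = β₀ := by rw [hC]; exact div_mul_cancel₀ β₀ (ne_of_gt hβ)
      rw [hCβ] at this
      rw [this]
    have hconvβ := hconv β hβ
    have hcomb : L (C⁻¹ • x) β ≤ C⁻¹ * L x β := by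
      have h0 : (0:ℝ) ≤ C⁻¹ := le_of_lt (inv_pos.mpr hCpos)
      have h1 : (0:ℝ) ≤ 1 - C⁻¹ := by
        have : C⁻¹ ≤ 1 := inv_le_one_of_one_le₀ hC1
        linarith
      have := hconvβ.2 (Set.mem_univ x) (Set.mem_univ (0 : Fin N → ℝ)) h0 h1
        (by ring)
      simp only [smul_zero, add_zero, smul_eq_mul] at this
      calc L (C⁻¹ • x) β ≤ C⁻¹ * L x β + (1 - C⁻¹) * L 0 β := this
        _ = C⁻¹ * L x β := by rw [hzero β hβ]; ring
    calc L x β₀ = C * L (C⁻¹ • x) β := key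
      _ ≤ C * (C⁻¹ * L x β) := by
          exact mul_le_mul_of_nonneg_left hcomb (le_of_lt hCpos)
      _ = L x β := by field_simp
  -- Limit: L x β → MAE x as β → 0+
  have hlimL : Tendsto (fun β : ℝ => L x β) (nhdsWithin 0 (Set.Ioi 0)) (nhds (MAE x)) := by
    have h1 : Tendsto (fun β : ℝ => (L x β - MAE x) / β * β + MAE x)
        (nhdsWithin 0 (Set.Ioi 0)) (nhds ((-1) * 0 + MAE x)) := by
      exact (((hlim x hx).mul (tendsto_nhdsWithin_of_tendsto_nhds tendsto_id)).add
        tendsto_const_nhds)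
    rw [neg_one_mul, neg_zero, zero_add] at h1
    refine h1.congr' ?_
    filter_upwards [self_mem_nhdsWithin] with β hβ
    have hβ' : β ≠ 0 := ne_of_gt hβ
    field_simp
    ring
  -- Upper bound: L x β₀ ≤ MAE x
  have hupper : L x β₀ ≤ MAE x := by
    refine ge_of_tendsto hlimL ?_
    filter_upwards [Ioo_mem_nhdsGT_of_mem (Set.left_mem_Ico.mpr hβ₀)] with β hβ
    exact hmono β hβ.1 (le_of_lt hβ.2)
  -- Lower bound: MAE x - β₀ ≤ L x β₀, via convexity of h(t) = L(t•x) 1 - t * MAE x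
  set h : ℝ → ℝ := fun t => L (t • x) 1 - t * MAE x with hhdef
  have hhconv : ConvexOn ℝ Set.univ h := by
    have hc1 := hconv 1 one_pos
    have hlin : ConvexOn ℝ Set.univ (fun t : ℝ => L (t • x) 1) := by
      have := hc1.comp_affineMap ((LinearMap.toSpanSingleton ℝ (Fin N → ℝ) x).toAffineMap)
      simpa [Function.comp_def] using this
    have hlin2 : ConcaveOn ℝ Set.univ (fun t : ℝ => t * MAE x) := by
      exact (LinearMap.concaveOn (LinearMap.smulRight (LinearMap.id : ℝ →ₗ[ℝ] ℝ) (MAE x))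
        convex_univ)
    exact hlin.sub hlin2
  have hhlim : Tendsto h atTop (nhds (-1)) := by
    have hcomp : Tendsto (fun t : ℝ => (L x t⁻¹ - MAE x) / t⁻¹) atTop (nhds (-1)) :=
      (hlim x hx).comp tendsto_inv_atTop_nhdsGT_zero
    refine hcomp.congr' ?_
    filter_upwards [eventually_gt_atTop (0:ℝ)] with t ht
    have htinv : 0 < t⁻¹ := inv_pos.mpr ht
    have := hhom' t⁻¹ htinv
    rw [inv_inv] at this
    simp only [hhdef, this]
    field_simp
  have hge : -1 ≤ h β₀⁻¹ := convex_ge_of_tendsto_atTop hhconv hhlim β₀⁻¹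
  have hlower : MAE x - β₀ ≤ L x β₀ := by
    have h1 : h β₀⁻¹ = (L x β₀ - MAE x) / β₀ := by
      have := hhom' β₀ hβ₀
      simp only [hhdef, this]
      field_simp
    rw [h1] at hge
    have := (le_div_iff₀ hβ₀).mp hge
    linarith
  -- now conclude
  rw [hLeq] at hupper hlower
  have hMAE : LSC x ≤ MAE x := hupper
  have hMAE2 : MAE x ≤ (1 + γ) * LSC x := by
    have hb : β₀ = γ * LSC x := hβ₀def
    linarith
  constructor
  · rw [le_div_iff₀ hLpos]; linarith
  · rw [div_le_iff₀ hLpos]; linarith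
end

section
/- Let L : ℝ^N × ℝ_{>0} → ℝ be such that for each fixed β > 0, L(·, β) is convex with L(0, β) = 0 and ∇_x L(0, β) = 0, and suppose lim_{t → ∞} (L(t·x, β) − MAE(t·x))/β = −1 holds uniformly in the sense that L(x, β) − MAE(x) is non-increasing along rays and tends to −β. Then for all x ∈ ℝ^N and β > 0: (a) L(x, β) ≥ MAE(x) − β, and (b) L(x, β) < MAE(x) whenever x ≠ 0. -/
open Filter

lemma MAE_smul {N : ℕ} (t : ℝ) (ht : 0 ≤ t) (x : Fin N → ℝ) :
    MAE (t • x) = t * MAE x := by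
  unfold MAE
  simp only [Pi.smul_apply, smul_eq_mul, abs_mul, abs_of_nonneg ht, ← Finset.mul_sum]
  ring

/-- Bounds `MAE(x) − β ≤ L(x,β) < MAE(x)` for a convex loss with zero value and
gradient at the origin whose difference from the MAE is non-increasing along rays
and tends to `−β`. -/
theorem loss_mae_sandwich {N : ℕ} (L : (Fin N → ℝ) → ℝ → ℝ)
    (hconv : ∀ β : ℝ, 0 < β → ConvexOn ℝ Set.univ (fun y => L y β))
    (hzero : ∀ β : ℝ, 0 < β → L 0 β = 0)
    (hgrad : ∀ β : ℝ, 0 < β → fderiv ℝ (fun y => L y β) 0 = 0)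
    (hray_mono : ∀ (y : Fin N → ℝ) (β : ℝ), 0 < β →
      AntitoneOn (fun t : ℝ => L (t • y) β - MAE (t • y)) (Set.Ioi 0))
    (hray_lim : ∀ (y : Fin N → ℝ), y ≠ 0 → ∀ β : ℝ, 0 < β →
      Tendsto (fun t : ℝ => L (t • y) β - MAE (t • y)) atTop (nhds (-β)))
    (x : Fin N → ℝ) (β : ℝ) (hβ : 0 < β) :
    MAE x - β ≤ L x β ∧ (x ≠ 0 → L x β < MAE x) := by
  constructor
  · by_cases hx : x = 0
    · subst hx
      simp [MAE, hzero β hβ]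
      linarith
    · have hlim := hray_lim x hx β hβ
      have h1 : ∀ᶠ t : ℝ in atTop,
          (fun t : ℝ => L (t • x) β - MAE (t • x)) t ≤ L x β - MAE x := by
        filter_upwards [eventually_ge_atTop (1:ℝ)] with t ht
        have := hray_mono x β hβ (Set.mem_Ioi.2 one_pos)
          (Set.mem_Ioi.2 (lt_of_lt_of_le one_pos ht)) ht
        simpa using this
      have := le_of_tendsto hlim h1
      linarith
  · intro hx
    by_contra h
    push_neg at h
    have hlim := hray_lim x hx β hβ
    have key : ∀ t : ℝ, 1 ≤ t → t * L x β ≤ L (t • x) β := by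
      intro t ht
      have htpos : (0:ℝ) < t := lt_of_lt_of_le one_pos ht
      have ha : (0:ℝ) ≤ 1/t := by positivity
      have hb : (0:ℝ) ≤ 1 - 1/t := by
        have : 1/t ≤ 1 := by rw [div_le_one htpos]; exact ht
        linarith
      have hab : (1/t) + (1 - 1/t) = 1 := by ring
      have hc := (hconv β hβ).2 (Set.mem_univ (t • x)) (Set.mem_univ (0 : Fin N → ℝ))
        ha hb hab
      have hpt : (1/t) • (t • x) + (1 - 1/t) • (0 : Fin N → ℝ) = x := by
        rw [smul_smul, smul_zero, add_zero]
        rw [one_div, inv_mul_cancel₀ (ne_of_gt htpos), one_smul]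
      simp only [hpt, hzero β hβ, smul_eq_mul] at hc
      have : L x β ≤ (1/t) * L (t • x) β := by linarith
      calc t * L x β ≤ t * ((1/t) * L (t • x) β) := by
            exact mul_le_mul_of_nonneg_left this (le_of_lt htpos)
        _ = L (t • x) β := by field_simp
    have h2 : ∀ᶠ t : ℝ in atTop,
        (0:ℝ) ≤ (fun t : ℝ => L (t • x) β - MAE (t • x)) t := by
      filter_upwards [eventually_ge_atTop (1:ℝ)] with t ht
      have h1 := key t ht
      have h2 := MAE_smul t (le_trans zero_le_one ht) x
      have h3 : t * MAE x ≤ t * L x β :=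
        mul_le_mul_of_nonneg_left h (le_trans zero_le_one ht)
      simp only [h2]
      linarith
    have := ge_of_tendsto hlim h2
    linarith
end

section
/- For fixed t ≠ 0, the function g(β) = (β/ln 2)·ln(cosh(t·ln 2/β)) on β > 0 has strictly positive second derivative: g''(β) > 0 for all β > 0. -/
open Real

/-- The single-coordinate rescaled LogCosh loss, as a function of the smoothness
scale `β`, has strictly positive second derivative on `(0, ∞)` for fixed `t ≠ 0`. -/
theorem logcosh_second_deriv_pos (t : ℝ) (ht : t ≠ 0) (β : ℝ) (hβ : 0 < β) :
    0 < deriv (deriv (fun b : ℝ => (b / Real.log 2) * Real.log (Real.cosh (t * Real.log 2 / b)))) β := by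
  have hL : (0:ℝ) < Real.log 2 := Real.log_pos one_lt_two
  set L := Real.log 2 with hLdef
  set c := t * L with hcdef
  have hc : c ≠ 0 := mul_ne_zero ht hL.ne'
  set g1 : ℝ → ℝ := fun b =>
    (Real.log (Real.cosh (c / b)) - (c / b) * (Real.sinh (c / b) / Real.cosh (c / b))) / L
    with hg1
  have hu : ∀ b : ℝ, b ≠ 0 → HasDerivAt (fun x : ℝ => c / x) (c * -(b ^ 2)⁻¹) b := by
    intro b hb
    simpa [div_eq_mul_inv] using (hasDerivAt_inv hb).const_mul c
  have hlc : ∀ u : ℝ, HasDerivAt (fun x : ℝ => Real.log (Real.cosh x))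
      (Real.sinh u / Real.cosh u) u := fun u =>
    (Real.hasDerivAt_cosh u).log (Real.cosh_pos u).ne'
  have hd1 : ∀ b : ℝ, b ≠ 0 →
      HasDerivAt (fun b : ℝ => (b / L) * Real.log (Real.cosh (c / b))) (g1 b) b := by
    intro b hb
    have h := ((hasDerivAt_id b).div_const L).mul
      ((hlc (c / b)).comp b (hu b hb))
    refine h.congr_deriv ?_
    have hch := (Real.cosh_pos (c / b)).ne'
    simp only [hg1, Function.comp_apply, id]
    field_simp [hg1]
    ring
  have hd2 : ∀ b : ℝ, b ≠ 0 →
      HasDerivAt g1 (c ^ 2 / (L * b ^ 3 * Real.cosh (c / b) ^ 2)) b := by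
    intro b hb
    have htanh : HasDerivAt (fun x : ℝ => Real.sinh x / Real.cosh x)
        ((Real.cosh (c / b) * Real.cosh (c / b) - Real.sinh (c / b) * Real.sinh (c / b)) /
          Real.cosh (c / b) ^ 2) (c / b) :=
      (Real.hasDerivAt_sinh _).div (Real.hasDerivAt_cosh _) (Real.cosh_pos _).ne'
    have h := ((((hlc (c / b)).comp b (hu b hb)).sub
      ((hu b hb).mul (htanh.comp b (hu b hb)))).div_const L)
    refine h.congr_deriv ?_
    have hch := (Real.cosh_pos (c / b)).ne'
    have hid : Real.cosh (c / b) * Real.cosh (c / b) - Real.sinh (c / b) * Real.sinh (c / b)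
        = 1 := by
      have := Real.cosh_sq_sub_sinh_sq (c / b); nlinarith [this]
    rw [hid]
    simp only [Function.comp_apply]
    field_simp
    ring
  have h1 : deriv (fun b : ℝ => (b / L) * Real.log (Real.cosh (c / b))) =ᶠ[nhds β] g1 :=
    (eventually_ne_nhds hβ.ne').mono fun b hb => (hd1 b hb).deriv
  rw [h1.deriv_eq, (hd2 β hβ.ne').deriv]
  have := Real.cosh_pos (c / β)
  positivity
end

section
/- Let Z be an N × F real matrix (N ≤ F), q ∈ ℝ^N, λ > 0, and set K̃ = ZᵀZ + λI_F, α = K̃^{-1}Zᵀq, and qʳ = Zα. For i ∈ {1, …, N}, let z_i denote the i-th row of Z, and let α^{(i)} be the ridge regression coefficients obtained by training on all rows except the i-th: α^{(i)} = (Z_{-i}ᵀZ_{-i} + λI_F)^{-1} Z_{-i}ᵀ q_{-i}, where Z_{-i} and q_{-i} omit the i-th row/entry. Then the leave-one-out prediction error satisfies z_iᵀα^{(i)} − q_i = (qʳ_i − q_i)/(1 − z_iᵀ K̃^{-1} z_i), provided z_iᵀ K̃^{-1} z_i ≠ 1. -/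
open Matrix

private lemma ridge_aux_posdef {m : Type*} [Fintype m] {F : ℕ}
    (A : Matrix m (Fin F) ℝ) {lam : ℝ} (hlam : 0 < lam) :
    (Aᵀ * A + lam • (1 : Matrix (Fin F) (Fin F) ℝ)).PosDef := by
  have h1 : (Aᵀ * A).PosSemidef := by
    have h := Matrix.posSemidef_conjTranspose_mul_self A
    rwa [Matrix.conjTranspose_eq_transpose_of_trivial] at h
  have h2 : (lam • (1 : Matrix (Fin F) (Fin F) ℝ)).PosDef := by
    rw [Matrix.smul_one_eq_diagonal]
    exact Matrix.PosDef.diagonal (fun _ => hlam)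
  exact Matrix.PosDef.posSemidef_add h1 h2

/-- Closed-form leave-one-out cross-validation error for linear ridge regression:
the prediction error of the model trained with row `i` left out equals
`(qʳᵢ − qᵢ)/(1 − zᵢᵀ K̃⁻¹ zᵢ)`. -/
theorem ridge_leave_one_out_formula {N F : ℕ} (hNF : N ≤ F)
    (Z : Matrix (Fin N) (Fin F) ℝ) (q : Fin N → ℝ) (lam : ℝ) (hlam : 0 < lam)
    (i : Fin N)
    -- full-data ridge objects
    (Kt : Matrix (Fin F) (Fin F) ℝ)
    (hKt : Kt = Zᵀ * Z + lam • (1 : Matrix (Fin F) (Fin F) ℝ))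
    (α : Fin F → ℝ) (hα : α = Kt⁻¹.mulVec (Zᵀ.mulVec q))
    (qr : Fin N → ℝ) (hqr : qr = Z.mulVec α)
    -- leave-one-out ridge objects (rows of `Z`, entries of `q`, with index `i` omitted)
    (Zmi : Matrix {j : Fin N // j ≠ i} (Fin F) ℝ)
    (hZmi : Zmi = Matrix.of (fun (j : {j : Fin N // j ≠ i}) (k : Fin F) => Z j.val k))
    (αi : Fin F → ℝ)
    (hαi : αi = (Zmiᵀ * Zmi + lam • (1 : Matrix (Fin F) (Fin F) ℝ))⁻¹.mulVec
        (Zmiᵀ.mulVec (fun j : {j : Fin N // j ≠ i} => q j.val)))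
    (hdenom : (fun k => Z i k) ⬝ᵥ Kt⁻¹.mulVec (fun k => Z i k) ≠ 1) :
    (fun k => Z i k) ⬝ᵥ αi - q i
      = (qr i - q i) / (1 - (fun k => Z i k) ⬝ᵥ Kt⁻¹.mulVec (fun k => Z i k)) := by
  classical
  set z : Fin F → ℝ := fun k => Z i k with hz
  set c : ℝ := z ⬝ᵥ Kt⁻¹.mulVec z with hc
  have hc1 : 1 - c ≠ 0 := fun h => hdenom (by linarith)
  -- invertibility of Kt
  have hKtpd : Kt.PosDef := hKt ▸ ridge_aux_posdef Z hlam
  have hKtdet : IsUnit Kt.det := (Matrix.isUnit_iff_isUnit_det _).mp hKtpd.isUnit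
  have hKtinv : Kt * Kt⁻¹ = 1 := Matrix.mul_nonsing_inv _ hKtdet
  have hKtinv' : Kt⁻¹ * Kt = 1 := Matrix.nonsing_inv_mul _ hKtdet
  -- invertibility of the leave-one-out matrix K'
  set K' : Matrix (Fin F) (Fin F) ℝ :=
    Zmiᵀ * Zmi + lam • (1 : Matrix (Fin F) (Fin F) ℝ) with hK'
  have hK'pd : K'.PosDef := ridge_aux_posdef Zmi hlam
  have hK'det : IsUnit K'.det := (Matrix.isUnit_iff_isUnit_det _).mp hK'pd.isUnit
  have hK'inv : K'⁻¹ * K' = 1 := Matrix.nonsing_inv_mul _ hK'det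
  -- structural identities relating the leave-one-out data to the full data
  have hsum : ∀ (f : Fin N → ℝ),
      (∑ j : {j : Fin N // j ≠ i}, f j.val) = (∑ j, f j) - f i := by
    intro f
    rw [eq_sub_iff_add_eq, ← Finset.sum_subtype (Finset.univ.erase i)
      (fun x => by simp [Finset.mem_erase]) f]
    exact Finset.sum_erase_add _ _ (Finset.mem_univ i)
  have hZZ : Zmiᵀ * Zmi = Zᵀ * Z - Matrix.vecMulVec z z := by
    ext k l
    simp only [Matrix.mul_apply, Matrix.sub_apply, Matrix.transpose_apply, hZmi,
      Matrix.of_apply, Matrix.vecMulVec_apply, hz]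
    exact hsum (fun j => Z j k * Z j l)
  have hb : Zmiᵀ.mulVec (fun j : {j : Fin N // j ≠ i} => q j.val)
      = Zᵀ.mulVec q - q i • z := by
    ext k
    simp only [Matrix.mulVec, dotProduct, Matrix.transpose_apply, hZmi,
      Matrix.of_apply, Pi.sub_apply, Pi.smul_apply, smul_eq_mul, hz]
    rw [hsum (fun j => Z j k * q j)]
    ring
  have hK'Kt : K' = Kt - Matrix.vecMulVec z z := by
    rw [hK', hZZ, hKt]; abel
  -- the candidate solution
  set t : ℝ := (qr i - q i) / (1 - c) with ht
  set w : Fin F → ℝ := Kt⁻¹.mulVec z with hw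
  set v : Fin F → ℝ := α + t • w with hv
  -- basic computations
  have hKtw : Kt.mulVec w = z := by
    rw [hw, Matrix.mulVec_mulVec, hKtinv, Matrix.one_mulVec]
  have hKtα : Kt.mulVec α = Zᵀ.mulVec q := by
    rw [hα, Matrix.mulVec_mulVec, hKtinv, Matrix.one_mulVec]
  have hzα : z ⬝ᵥ α = qr i := by
    rw [hqr]
    simp [Matrix.mulVec, dotProduct, hz]
  have hvecmul : ∀ u : Fin F → ℝ, (Matrix.vecMulVec z z).mulVec u = (z ⬝ᵥ u) • z := by
    intro u
    ext k
    simp only [Matrix.mulVec, dotProduct, Matrix.vecMulVec_apply, Pi.smul_apply,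
      smul_eq_mul, Finset.mul_sum]
    rw [Finset.sum_mul]
    exact Finset.sum_congr rfl fun _ _ => by ring
  have hzv : z ⬝ᵥ v = qr i + t * c := by
    rw [hv, dotProduct_add, hzα, dotProduct_smul, smul_eq_mul, ← hc]
  -- K' * v = leave-one-out right-hand side
  have hkey : K'.mulVec v = Zmiᵀ.mulVec (fun j : {j : Fin N // j ≠ i} => q j.val) := by
    rw [hK'Kt, Matrix.sub_mulVec, hvecmul, hzv, hb]
    have : Kt.mulVec v = Zᵀ.mulVec q + t • z := by
      rw [hv, Matrix.mulVec_add, hKtα, Matrix.mulVec_smul, hKtw]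
    rw [this]
    have htc : t * (1 - c) = qr i - q i := by
      rw [ht]; field_simp
    ext k
    simp only [Pi.add_apply, Pi.sub_apply, Pi.smul_apply, smul_eq_mul]
    linear_combination z k * htc
  -- hence αi = v
  have hαiv : αi = v := by
    rw [hαi, ← hkey, Matrix.mulVec_mulVec, hK'inv, Matrix.one_mulVec]
  -- final computation
  have hgoal : z ⬝ᵥ αi = qr i + t * c := by rw [hαiv, hzv]
  show z ⬝ᵥ αi - q i = (qr i - q i) / (1 - c)
  rw [hgoal, ← ht]
  have htc : t * (1 - c) = qr i - q i := by rw [ht]; field_simp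
  linear_combination -htc
end

section
/- Let F : ℝ^N × ℝ → ℝ be defined piecewise by F(x, l) = L(x, γl) − l for l > 0 and F(x, l) = MAE(x) − (γ+1)l for l ≤ 0, where γ ∈ (0,1), MAE(x) = (1/N)Σ|x_i|, and L satisfies: L is convex in x for fixed β, jointly positively homogeneous of degree 1, and lim_{β→0⁺}(L(x,β) − MAE(x))/β = −1 with left and right l-derivatives of F at l = 0 both equal to −(γ+1). If additionally F is convex in l for fixed x and in x for fixed l, and F restricted to each half {l > 0}, {l ≤ 0} is convex jointly and these pieces agree to first order at l = 0, then F is jointly convex on ℝ^N × ℝ. -/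
open Filter

/-- Gluing step for the convexity of the self-consistent loss: the piecewise
function `F(x,l) = L(x,γl) − l` for `l > 0` and `F(x,l) = MAE(x) − (γ+1)l` for
`l ≤ 0`, convex on each half-space, continuous and agreeing to first order in `l`
at the interface `l = 0`, is jointly convex. -/
theorem piecewise_selfconsistent_convex {N : ℕ} (γ : ℝ) (hγ : γ ∈ Set.Ioo (0 : ℝ) 1)
    (L : (Fin N → ℝ) → ℝ → ℝ) (F : (Fin N → ℝ) → ℝ → ℝ)
    (hFpos : ∀ (x : Fin N → ℝ) (l : ℝ), 0 < l → F x l = L x (γ * l) - l)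
    (hFneg : ∀ (x : Fin N → ℝ) (l : ℝ), l ≤ 0 → F x l = MAE x - (γ + 1) * l)
    (hLconv : ∀ β : ℝ, 0 < β → ConvexOn ℝ Set.univ (fun y => L y β))
    (hLhom : ∀ C : ℝ, 0 < C → ∀ (y : Fin N → ℝ) (β : ℝ), L (C • y) (C * β) = C * L y β)
    (hLlim : ∀ (y : Fin N → ℝ), y ≠ 0 →
      Tendsto (fun β : ℝ => (L y β - MAE y) / β) (nhdsWithin 0 (Set.Ioi 0)) (nhds (-1)))
    (hFderiv : ∀ x : Fin N → ℝ, HasDerivAt (fun l : ℝ => F x l) (-(γ + 1)) 0)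
    (hFcont : Continuous (fun p : (Fin N → ℝ) × ℝ => F p.1 p.2))
    (hFconv_l : ∀ x : Fin N → ℝ, ConvexOn ℝ Set.univ (fun l : ℝ => F x l))
    (hFconv_x : ∀ l : ℝ, ConvexOn ℝ Set.univ (fun x : Fin N → ℝ => F x l))
    (hFconv_pos : ConvexOn ℝ {p : (Fin N → ℝ) × ℝ | 0 < p.2}
      (fun p : (Fin N → ℝ) × ℝ => F p.1 p.2))
    (hFconv_neg : ConvexOn ℝ {p : (Fin N → ℝ) × ℝ | p.2 ≤ 0}
      (fun p : (Fin N → ℝ) × ℝ => F p.1 p.2)) :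
    ConvexOn ℝ Set.univ (fun p : (Fin N → ℝ) × ℝ => F p.1 p.2) := by
  -- value at the interface
  have hzero : ∀ x : Fin N → ℝ, F x 0 = MAE x := by
    intro x; simpa using hFneg x 0 le_rfl
  -- F lies above its tangent line in l at 0
  have hFG : ∀ (x : Fin N → ℝ) (l : ℝ), MAE x - (γ + 1) * l ≤ F x l := by
    intro x l
    rcases le_or_gt l 0 with hl | hl
    · rw [hFneg x l hl]
    · have h := (hFconv_l x).le_slope_of_hasDerivAt (Set.mem_univ 0) (Set.mem_univ l)
        hl (hFderiv x)
      have h' : -(γ + 1) ≤ (F x l - MAE x) / l := by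
        simpa [slope_def_field, hzero x] using h
      rw [le_div_iff₀ hl] at h'
      linarith
  -- MAE is convex
  have hMAE : ConvexOn ℝ Set.univ (MAE (N := N)) := by
    have h := hFconv_x 0
    have : (fun x : Fin N → ℝ => F x 0) = MAE := funext hzero
    rwa [this] at h
  -- convexity on the closed half-space {0 ≤ l}
  have hnonneg : ConvexOn ℝ {p : (Fin N → ℝ) × ℝ | 0 ≤ p.2}
      (fun p : (Fin N → ℝ) × ℝ => F p.1 p.2) := by
    constructor
    · intro p hp q hq a b ha hb hab
      simp only [Set.mem_setOf_eq] at *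
      have : 0 ≤ a * p.2 + b * q.2 := by positivity
      simpa using this
    · intro p hp q hq a b ha hb hab
      simp only [Set.mem_setOf_eq] at hp hq
      -- approximate from the open half-space
      have key : ∀ ε > (0:ℝ),
          F (a • p.1 + b • q.1) (a * p.2 + b * q.2 + ε)
            ≤ a * F p.1 (p.2 + ε) + b * F q.1 (q.2 + ε) := by
        intro ε hε
        have h := hFconv_pos.2 (x := (p.1, p.2 + ε)) (y := (q.1, q.2 + ε))
          (by simp only [Set.mem_setOf_eq]; positivity)
          (by simp only [Set.mem_setOf_eq]; positivity) ha hb hab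
        have he : a * (p.2 + ε) + b * (q.2 + ε) = a * p.2 + b * q.2 + ε := by
          have : a * ε + b * ε = ε := by rw [← add_mul, hab, one_mul]
          ring_nf; linarith [this]
        simpa [Prod.smul_mk, Prod.mk_add_mk, smul_eq_mul, he] using h
      -- take ε → 0⁺
      have hlim1 : Tendsto (fun ε : ℝ => F (a • p.1 + b • q.1) (a * p.2 + b * q.2 + ε))
          (nhdsWithin 0 (Set.Ioi 0)) (nhds (F (a • p.1 + b • q.1) (a * p.2 + b * q.2))) := by
        have c0 : Continuous (fun ε : ℝ => F (a • p.1 + b • q.1) (a * p.2 + b * q.2 + ε)) := by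
          have heq : (fun ε : ℝ => F (a • p.1 + b • q.1) (a * p.2 + b * q.2 + ε))
              = (fun pp : (Fin N → ℝ) × ℝ => F pp.1 pp.2)
                ∘ (fun ε : ℝ => (a • p.1 + b • q.1, a * p.2 + b * q.2 + ε)) := rfl
          rw [heq]
          exact hFcont.comp (continuous_const.prodMk (continuous_const.add continuous_id))
        simpa using (c0.tendsto 0).mono_left nhdsWithin_le_nhds
      have hlim2 : Tendsto (fun ε : ℝ => a * F p.1 (p.2 + ε) + b * F q.1 (q.2 + ε))
          (nhdsWithin 0 (Set.Ioi 0)) (nhds (a * F p.1 p.2 + b * F q.1 q.2)) := by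
        have c1 : Continuous (fun ε : ℝ => a * F p.1 (p.2 + ε) + b * F q.1 (q.2 + ε)) := by
          have e1 : Continuous (fun ε : ℝ => F p.1 (p.2 + ε)) := by
            have heq : (fun ε : ℝ => F p.1 (p.2 + ε))
                = (fun pp : (Fin N → ℝ) × ℝ => F pp.1 pp.2)
                  ∘ (fun ε : ℝ => (p.1, p.2 + ε)) := rfl
            rw [heq]
            exact hFcont.comp (continuous_const.prodMk (continuous_const.add continuous_id))
          have e2 : Continuous (fun ε : ℝ => F q.1 (q.2 + ε)) := by
            have heq : (fun ε : ℝ => F q.1 (q.2 + ε))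
                = (fun pp : (Fin N → ℝ) × ℝ => F pp.1 pp.2)
                  ∘ (fun ε : ℝ => (q.1, q.2 + ε)) := rfl
            rw [heq]
            exact hFcont.comp (continuous_const.prodMk (continuous_const.add continuous_id))
          exact (continuous_const.mul e1).add (continuous_const.mul e2)
        simpa using (c1.tendsto 0).mono_left nhdsWithin_le_nhds
      have hev : ∀ᶠ ε in nhdsWithin (0:ℝ) (Set.Ioi 0),
          F (a • p.1 + b • q.1) (a * p.2 + b * q.2 + ε)
            ≤ a * F p.1 (p.2 + ε) + b * F q.1 (q.2 + ε) :=
        eventually_nhdsWithin_of_forall (fun ε hε => key ε hε)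
      have := le_of_tendsto_of_tendsto hlim1 hlim2 hev
      simpa using this
  -- the mixed case
  have key : ∀ (p q : (Fin N → ℝ) × ℝ) (a b : ℝ), p.2 ≤ 0 → 0 < q.2 →
      0 ≤ a → 0 ≤ b → a + b = 1 →
      F (a • p.1 + b • q.1) (a * p.2 + b * q.2)
        ≤ a * F p.1 p.2 + b * F q.1 q.2 := by
    intro p q a b hp hq ha hb hab
    have hGp : F p.1 p.2 = MAE p.1 - (γ + 1) * p.2 := hFneg _ _ hp
    have hGq : MAE q.1 - (γ + 1) * q.2 ≤ F q.1 q.2 := hFG _ _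
    rcases le_or_gt (a * p.2 + b * q.2) 0 with hm | hm
    · rw [hFneg _ _ hm]
      have hM := hMAE.2 (Set.mem_univ p.1) (Set.mem_univ q.1) ha hb hab
      simp only [smul_eq_mul] at hM
      calc MAE (a • p.1 + b • q.1) - (γ + 1) * (a * p.2 + b * q.2)
          ≤ a * MAE p.1 + b * MAE q.1 - (γ + 1) * (a * p.2 + b * q.2) := by linarith
        _ = a * (MAE p.1 - (γ + 1) * p.2) + b * (MAE q.1 - (γ + 1) * q.2) := by ring
        _ ≤ a * F p.1 p.2 + b * F q.1 q.2 := by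
            have := mul_le_mul_of_nonneg_left hGq hb
            rw [hGp]; linarith
    · -- crossing point
      have hqp : 0 < q.2 - p.2 := by linarith
      set s : ℝ := q.2 / (q.2 - p.2) with hs
      have hs0 : 0 < s := div_pos hq hqp
      have hs1 : s ≤ 1 := by
        rw [div_le_one hqp]; linarith
      have hr2 : s * p.2 + (1 - s) * q.2 = 0 := by
        have h7 : s * (q.2 - p.2) = q.2 := by rw [hs]; exact div_mul_cancel₀ _ hqp.ne'
        linear_combination -h7
      set c : ℝ := a / s with hc
      have hc0 : 0 ≤ c := div_nonneg ha hs0.le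
      have hcs : c * s = a := by rw [hc]; exact div_mul_cancel₀ _ hs0.ne'
      have hc1 : c ≤ 1 := by
        rw [hc, div_le_one hs0, hs]
        rw [le_div_iff₀ hqp]
        have hb' : b = 1 - a := by linarith
        have h5 : b * q.2 = q.2 - a * q.2 := by rw [hb']; ring
        linarith [hm, h5]
      set d : ℝ := 1 - c with hd
      have hd0 : 0 ≤ d := by linarith
      set r : (Fin N → ℝ) × ℝ := (s • p.1 + (1 - s) • q.1, 0) with hrdef
      have hcd : c + d = 1 := by rw [hd]; ring
      -- F at the crossing point
      have hFr : F r.1 r.2 ≤ s * F p.1 p.2 + (1 - s) * (MAE q.1 - (γ + 1) * q.2) := by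
        have hM := hMAE.2 (Set.mem_univ p.1) (Set.mem_univ q.1) hs0.le (by linarith : (0:ℝ) ≤ 1 - s)
          (by ring)
        simp only [smul_eq_mul] at hM
        have : F r.1 r.2 = MAE (s • p.1 + (1 - s) • q.1) := by
          rw [hrdef]; exact hzero _
        rw [this, hGp]
        have h0 : (γ + 1) * (s * p.2 + (1 - s) * q.2) = 0 := by rw [hr2]; ring
        linarith [hM, h0]
      -- convex combination inside the nonneg half-space
      have hcomb := hnonneg.2 (x := r) (y := q) (by simp [hrdef])
        (by simp only [Set.mem_setOf_eq]; exact hq.le) hc0 hd0 hcd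
      have h1 : (c • r + d • q).1 = a • p.1 + b • q.1 := by
        simp only [hrdef, Prod.fst_add, Prod.smul_fst, smul_add, smul_smul]
        rw [hcs]
        have : c * (1 - s) + d = b := by
          have : c * (1 - s) + d = 1 - c * s := by rw [hd]; ring
          rw [this, hcs]; linarith
        rw [← this]
        module
      have h2 : (c • r + d • q).2 = a * p.2 + b * q.2 := by
        simp only [hrdef, Prod.snd_add, Prod.smul_snd, smul_eq_mul, mul_zero, zero_add]
        have hsp : s * p.2 = -((1 - s) * q.2) := by linarith [hr2]
        have h5 : a * p.2 = -(c * q.2) + a * q.2 := by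
          calc a * p.2 = c * (s * p.2) := by rw [← hcs]; ring
            _ = c * (-((1 - s) * q.2)) := by rw [hsp]
            _ = -(c * q.2) + (c * s) * q.2 := by ring
            _ = -(c * q.2) + a * q.2 := by rw [hcs]
        have hb' : b = 1 - a := by linarith
        rw [h5, hb', hd]; ring
      simp only [smul_eq_mul] at hcomb
      rw [h1, h2] at hcomb
      calc F (a • p.1 + b • q.1) (a * p.2 + b * q.2)
          ≤ c * F r.1 r.2 + d * F q.1 q.2 := hcomb
        _ ≤ c * (s * F p.1 p.2 + (1 - s) * (MAE q.1 - (γ + 1) * q.2)) + d * F q.1 q.2 := by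
            have := mul_le_mul_of_nonneg_left hFr hc0
            linarith
        _ ≤ a * F p.1 p.2 + b * F q.1 q.2 := by
            have h3 : c * (1 - s) = b - d := by
              have h6 : c * (1 - s) + d = 1 - c * s := by rw [hd]; ring
              rw [hcs] at h6; linarith
            have h4 : 0 ≤ c * (1 - s) := mul_nonneg hc0 (by linarith)
            have e1 : c * (s * F p.1 p.2) = a * F p.1 p.2 := by rw [← hcs]; ring
            have e2 : (c * (1 - s)) * (MAE q.1 - (γ + 1) * q.2)
                ≤ (b - d) * F q.1 q.2 := by
              calc (c * (1 - s)) * (MAE q.1 - (γ + 1) * q.2)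
                  ≤ (c * (1 - s)) * F q.1 q.2 := mul_le_mul_of_nonneg_left hGq h4
                _ = (b - d) * F q.1 q.2 := by rw [h3]
            nlinarith [e1, e2]
  constructor
  · exact convex_univ
  · intro p _ q _ a b ha hb hab
    simp only [Prod.fst_add, Prod.snd_add, Prod.smul_fst, Prod.smul_snd, smul_eq_mul]
    rcases le_or_gt p.2 0 with hp | hp <;> rcases le_or_gt q.2 0 with hq | hq
    · have := hFconv_neg.2 (x := p) (y := q) hp hq ha hb hab
      simpa using this
    · exact key p q a b hp hq ha hb hab
    · have := key q p b a hq hp hb ha (by linarith)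
      calc F (a • p.1 + b • q.1) (a * p.2 + b * q.2)
          = F (b • q.1 + a • p.1) (b * q.2 + a * p.2) := by rw [add_comm (a • p.1), add_comm (a * p.2)]
        _ ≤ b * F q.1 q.2 + a * F p.1 p.2 := this
        _ = a * F p.1 p.2 + b * F q.1 q.2 := by ring
    · have := hnonneg.2 (x := p) (y := q) (le_of_lt hp) (le_of_lt hq) ha hb hab
      simpa using this
end

section
/- Let F : ℝ^N × ℝ → ℝ be jointly convex and C¹, and suppose for each x the equation F(x, l) = 0 has a unique solution l = L(x) at which ∂F/∂l (x, L(x)) < 0. Then L is convex: for any a, b ∈ ℝ^N and κ ∈ [0,1], L(κa + (1−κ)b) ≤ κL(a) + (1−κ)L(b). -/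
/-- Implicit-function convexity: if `F` is jointly convex and `C¹`, and for each
`x` the equation `F(x, l) = 0` has the unique solution `l = L(x)`, at which the
partial derivative in `l` is strictly negative, then `L` is convex. -/
theorem implicit_root_convex {N : ℕ}
    (F : (Fin N → ℝ) → ℝ → ℝ) (L : (Fin N → ℝ) → ℝ)
    (hFconv : ConvexOn ℝ Set.univ (fun p : (Fin N → ℝ) × ℝ => F p.1 p.2))
    (hFsmooth : ContDiff ℝ 1 (fun p : (Fin N → ℝ) × ℝ => F p.1 p.2))
    (hroot : ∀ x, F x (L x) = 0)
    (huniq : ∀ x l, F x l = 0 → l = L x)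
    (hderiv_neg : ∀ x, deriv (fun l => F x l) (L x) < 0) :
    ∀ (a b : Fin N → ℝ) (κ : ℝ), κ ∈ Set.Icc (0 : ℝ) 1 →
      L (κ • a + (1 - κ) • b) ≤ κ * L a + (1 - κ) * L b := by
  intro a b κ hκ
  obtain ⟨hκ0, hκ1⟩ := hκ
  set x : Fin N → ℝ := κ • a + (1 - κ) • b with hx
  set m : ℝ := κ * L a + (1 - κ) * L b with hm
  -- F x m ≤ 0 by joint convexity
  have hFm : F x m ≤ 0 := by
    have h1 : (0:ℝ) ≤ 1 - κ := by linarith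
    have h2 : κ + (1 - κ) = 1 := by ring
    have := hFconv.2 (Set.mem_univ ((a, L a) : (Fin N → ℝ) × ℝ))
      (Set.mem_univ ((b, L b) : (Fin N → ℝ) × ℝ)) hκ0 h1 h2
    simp only [Prod.smul_mk, Prod.mk_add_mk, smul_eq_mul] at this
    rw [hroot a, hroot b] at this
    simpa [hx, hm] using this
  -- g := F x · is convex and differentiable
  have hg_conv : ConvexOn ℝ Set.univ (fun l => F x l) := by
    let Aff : ℝ →ᵃ[ℝ] (Fin N → ℝ) × ℝ :=
      { toFun := fun l : ℝ => (x, l)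
        linear := { toFun := fun l : ℝ => ((0 : Fin N → ℝ), l)
                    map_add' := by intro p q; simp [Prod.ext_iff]
                    map_smul' := by intro c p; simp [Prod.ext_iff] }
        map_vadd' := by intro p v; simp [Prod.ext_iff] }
    have haff := hFconv.comp_affineMap Aff
    have hpre : Aff ⁻¹' Set.univ = Set.univ := Set.preimage_univ
    rw [hpre] at haff
    exact haff
  have hg_diff : DifferentiableAt ℝ (fun l => F x l) (L x) := by
    have : DifferentiableAt ℝ (fun p : (Fin N → ℝ) × ℝ => F p.1 p.2) (x, L x) :=
      (hFsmooth.differentiable one_ne_zero) _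
    exact this.comp (L x) (DifferentiableAt.prodMk (differentiableAt_const x) differentiableAt_id)
  -- conclude by contradiction
  by_contra hlt
  push_neg at hlt
  have hmx : m < L x := hlt
  have hslope : slope (fun l => F x l) m (L x) ≤ deriv (fun l => F x l) (L x) :=
    hg_conv.slope_le_of_hasDerivAt (Set.mem_univ m) (Set.mem_univ (L x)) hmx
      hg_diff.hasDerivAt
  have hslope_nonneg : (0 : ℝ) ≤ slope (fun l => F x l) m (L x) := by
    rw [slope_def_field]
    have h1 : F x (L x) - F x m ≥ 0 := by rw [hroot x]; linarith
    have h2 : (0 : ℝ) < L x - m := by linarith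
    positivity
  linarith [hderiv_neg x]
end
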